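/- Let T be a locally finite rooted tree and fix a height h ≥ 1. For every vertex v at height |v| < h, let z_v(h) denote the number of vertices of T at height h that are descendants of v, and let z(h) denote the number of vertices at height h (descendants of the root). For a vertex v with children v1, ..., vd(v), define φ(v,h) = 2 · Σ_{1 ≤ i < j ≤ d(v)} z_{vi}(h) · z_{vj}(h). Then z(h)(z(h)−1) = Σ_{v : |v| < h} φ(v,h). -/

import Mathlib

open Finset

/-- The number of vertices of the tree `T` at height `h` that are descendants of `v`. -/
def treeCount (T : Finset (List ℕ)) (h : ℕ) (v : List ℕ) : ℕ :=
  (T.filter (fun w => w.length = h ∧ v <+: w)).card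

/-- The children of `v` in the tree `T`: the vertices extending `v` by one letter. -/
def treeChildren (T : Finset (List ℕ)) (v : List ℕ) : Finset (List ℕ) :=
  T.filter (fun w => w.length = v.length + 1 ∧ v <+: w)

/-- `φ(v,h) = 2 Σ_{1 ≤ i < j ≤ d(v)} z_{vi}(h) z_{vj}(h)`, written as the sum over
ordered pairs of distinct children. -/
def treePhi (T : Finset (List ℕ)) (h : ℕ) (v : List ℕ) : ℕ :=
  ∑ p ∈ (treeChildren T v).offDiag, treeCount T h p.1 * treeCount T h p.2

namespace TreeAux

/-- Longest common prefix of two lists. -/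
def meet : List ℕ → List ℕ → List ℕ
  | x :: xs, y :: ys => if x = y then x :: meet xs ys else []
  | _, _ => []

lemma meet_append (v x y : List ℕ) : meet (v ++ x) (v ++ y) = v ++ meet x y := by
  induction v with
  | nil => rfl
  | cons a v ih => simp [meet, ih]

lemma meet_prefix_left : ∀ a b : List ℕ, meet a b <+: a
  | [], _ => by simp [meet]
  | _ :: _, [] => by simp [meet]
  | x :: xs, y :: ys => by
      by_cases hxy : x = y
      · simp only [meet, if_pos hxy]
        exact List.cons_prefix_cons.mpr ⟨rfl, meet_prefix_left xs ys⟩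
      · simp [meet, hxy]

lemma meet_prefix_right : ∀ a b : List ℕ, meet a b <+: b
  | [], _ => by simp [meet]
  | _ :: _, [] => by simp [meet]
  | x :: xs, y :: ys => by
      by_cases hxy : x = y
      · simp only [meet, if_pos hxy]
        exact List.cons_prefix_cons.mpr ⟨hxy, meet_prefix_right xs ys⟩
      · simp [meet, hxy]

lemma prefix_meet {c a b : List ℕ} (ha : c <+: a) (hb : c <+: b) : c <+: meet a b := by
  obtain ⟨s, rfl⟩ := ha
  obtain ⟨t, rfl⟩ := hb
  rw [meet_append]
  exact List.prefix_append _ _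

lemma meet_eq_of_ne (v : List ℕ) {x y : ℕ} (hxy : x ≠ y) (s t : List ℕ) :
    meet (v ++ x :: s) (v ++ y :: t) = v := by
  rw [meet_append]
  simp [meet, hxy]

end TreeAux

open TreeAux

theorem stmt_0 (T : Finset (List ℕ)) (h : ℕ) (hh : 1 ≤ h)
    (hroot : ([] : List ℕ) ∈ T)
    (hprefix : ∀ v w : List ℕ, w ∈ T → v <+: w → v ∈ T) :
    treeCount T h [] * (treeCount T h [] - 1)
      = ∑ v ∈ T.filter (fun v => v.length < h), treePhi T h v := by
  classical
  set S : Finset (List ℕ) := T.filter (fun w => w.length = h) with hS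
  have hmemS : ∀ {w : List ℕ}, w ∈ S ↔ w ∈ T ∧ w.length = h := by
    intro w; simp [hS]
  have hcount : ∀ c : List ℕ, treeCount T h c = (S.filter (fun w => c <+: w)).card := by
    intro c
    rw [treeCount, hS, Finset.filter_filter]
  -- the LHS is the number of ordered pairs of distinct height-h vertices
  have hroot_count : treeCount T h [] = S.card := by
    rw [hcount]
    congr 1
    apply Finset.filter_true_of_mem
    intro w _; exact List.nil_prefix
  rw [hroot_count]
  have hLHS : S.card * (S.card - 1) = S.offDiag.card := by
    rw [Finset.offDiag_card, Nat.mul_sub, Nat.mul_one]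
  rw [hLHS]
  -- the meet of two distinct height-h vertices lies in the index set
  have hmeet_mem : ∀ p ∈ S.offDiag, meet p.1 p.2 ∈ T.filter (fun v => v.length < h) := by
    rintro ⟨a, b⟩ hp
    rw [Finset.mem_offDiag] at hp
    obtain ⟨ha, hb, hab⟩ := hp
    rw [hmemS] at ha hb
    have hpa := meet_prefix_left a b
    have hpb := meet_prefix_right a b
    rw [Finset.mem_filter]
    refine ⟨hprefix _ _ ha.1 hpa, ?_⟩
    rcases lt_or_eq_of_le (hpa.length_le.trans_eq ha.2) with hlt | heq
    · exact hlt
    · exfalso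
      have h1 : meet a b = a := hpa.eq_of_length (heq.trans ha.2.symm)
      have h2 : meet a b = b := hpb.eq_of_length (heq.trans hb.2.symm)
      exact hab (h1 ▸ h2)
  rw [Finset.card_eq_sum_card_fiberwise hmeet_mem]
  apply Finset.sum_congr rfl
  intro v hv
  rw [Finset.mem_filter] at hv
  obtain ⟨hvT, hvlen⟩ := hv
  -- partition the pairs with meet v by the pair of children they pass through
  have hstep : ∀ p ∈ S.offDiag.filter (fun p => meet p.1 p.2 = v),
      ((p.1.take (v.length + 1), p.2.take (v.length + 1)) : List ℕ × List ℕ)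
        ∈ (treeChildren T v).offDiag := by
    rintro ⟨a, b⟩ hp
    rw [Finset.mem_filter, Finset.mem_offDiag] at hp
    obtain ⟨⟨ha, hb, hab⟩, hmeet⟩ := hp
    rw [hmemS] at ha hb
    have hpa : v <+: a := hmeet ▸ meet_prefix_left a b
    have hpb : v <+: b := hmeet ▸ meet_prefix_right a b
    obtain ⟨s, rfl⟩ := hpa
    obtain ⟨t, rfl⟩ := hpb
    have hslen : s ≠ [] := by
      rintro rfl; simp at ha; omega
    have htlen : t ≠ [] := by
      rintro rfl; simp at hb; omega
    obtain ⟨x, s, rfl⟩ := List.exists_cons_of_ne_nil hslen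
    obtain ⟨y, t, rfl⟩ := List.exists_cons_of_ne_nil htlen
    have hxy : x ≠ y := by
      rintro rfl
      have : v ++ [x] <+: meet (v ++ x :: s) (v ++ x :: t) :=
        prefix_meet (by simp) (by simp)
      rw [hmeet] at this
      have := this.length_le
      simp at this
    have htake1 : (v ++ x :: s).take (v.length + 1) = v ++ [x] := by
      simpa using List.take_length_add_append (l₁ := v) (l₂ := x :: s) 1
    have htake2 : (v ++ y :: t).take (v.length + 1) = v ++ [y] := by
      simpa using List.take_length_add_append (l₁ := v) (l₂ := y :: t) 1
    rw [htake1, htake2, Finset.mem_offDiag]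
    refine ⟨?_, ?_, by simp [hxy]⟩
    · rw [treeChildren, Finset.mem_filter]
      exact ⟨hprefix _ _ ha.1 (by simp), by simp, List.prefix_append _ _⟩
    · rw [treeChildren, Finset.mem_filter]
      exact ⟨hprefix _ _ hb.1 (by simp), by simp, List.prefix_append _ _⟩
  rw [Finset.card_eq_sum_card_fiberwise hstep, treePhi]
  apply Finset.sum_congr rfl
  rintro ⟨c₁, c₂⟩ hc
  rw [Finset.mem_offDiag] at hc
  obtain ⟨hc₁, hc₂, hcne⟩ := hc
  rw [treeChildren, Finset.mem_filter] at hc₁ hc₂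
  -- decompose the children
  obtain ⟨d₁, rfl⟩ := hc₁.2.2
  obtain ⟨d₂, rfl⟩ := hc₂.2.2
  have hd₁ : d₁.length = 1 := by have := hc₁.2.1; simp at this; omega
  have hd₂ : d₂.length = 1 := by have := hc₂.2.1; simp at this; omega
  obtain ⟨x, rfl⟩ := List.length_eq_one_iff.mp hd₁
  obtain ⟨y, rfl⟩ := List.length_eq_one_iff.mp hd₂
  have hxy : x ≠ y := by rintro rfl; exact hcne rfl
  -- the fiber over (c₁, c₂) is the product of descendant sets
  have hfiber :
      (S.offDiag.filter (fun p => meet p.1 p.2 = v)).filter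
        (fun p => (p.1.take (v.length + 1), p.2.take (v.length + 1)) = (v ++ [x], v ++ [y]))
      = (S.filter (fun w => v ++ [x] <+: w)) ×ˢ (S.filter (fun w => v ++ [y] <+: w)) := by
    ext ⟨a, b⟩
    simp only [Finset.mem_filter, Finset.mem_offDiag, Finset.mem_product, Prod.mk.injEq]
    constructor
    · rintro ⟨⟨⟨ha, hb, hab⟩, hmeet⟩, h1, h2⟩
      refine ⟨⟨ha, ?_⟩, hb, ?_⟩
      · rw [← h1]; exact List.take_prefix _ _
      · rw [← h2]; exact List.take_prefix _ _
    · rintro ⟨⟨ha, hpa⟩, hb, hpb⟩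
      obtain ⟨s, rfl⟩ := hpa
      obtain ⟨t, rfl⟩ := hpb
      rw [List.append_assoc, List.append_assoc] at *
      simp only [List.singleton_append] at *
      have htake1 : (v ++ x :: s).take (v.length + 1) = v ++ [x] := by
        simpa using List.take_length_add_append (l₁ := v) (l₂ := x :: s) 1
      have htake2 : (v ++ y :: t).take (v.length + 1) = v ++ [y] := by
        simpa using List.take_length_add_append (l₁ := v) (l₂ := y :: t) 1
      have hab : (v ++ x :: s) ≠ (v ++ y :: t) := by
        intro hEq
        have := congrArg (List.take (v.length + 1)) hEq
        rw [htake1, htake2] at this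
        exact hxy (by simpa using List.append_cancel_left this)
      exact ⟨⟨⟨ha, hb, hab⟩, meet_eq_of_ne v hxy s t⟩, htake1, htake2⟩
  rw [hfiber, Finset.card_product, hcount, hcount]
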